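/- Let $Q_1, \ldots, Q_k \subseteq \mathbb{R}^E$ be polytopes with Minkowski sum $Q = \sum_{i=1}^k Q_i$, and let $Q_i^{\uparrow} = Q_i + \mathbb{R}_{\geq 0}^E$ and $Q^{\uparrow} = Q + \mathbb{R}_{\geq 0}^E$ denote their dominants. Then the set of edge directions of (bounded edges of) $Q^{\uparrow}$ is the union over $i$ of the sets of edge directions of $Q_i^{\uparrow}$. -/

import Mathlib

open Finset Pointwise

/-- `segment ℝ u v` (with `u ≠ v`) is a (bounded) edge of `Q` when it is an extreme
subset of `Q`, i.e. a one-dimensional face. -/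
def IsEdgeOf {V : Type*} [AddCommGroup V] [Module ℝ V] (Q : Set V) (u v : V) : Prop :=
  u ≠ v ∧ IsExtreme ℝ Q (segment ℝ u v)

/-- `w` is an edge direction of `Q` if some (bounded) edge of `Q` is parallel to `w`. -/
def IsEdgeDirOf {V : Type*} [AddCommGroup V] [Module ℝ V] (Q : Set V) (w : V) : Prop :=
  ∃ u v, IsEdgeOf Q u v ∧ ∃ t : ℝ, t ≠ 0 ∧ v - u = t • w

/-- The dominant of a set `Q ⊆ ℝ^E`: `Q + ℝ₊^E`. -/
def dominant {E : Type*} (Q : Set (E → ℝ)) : Set (E → ℝ) :=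
  {x | ∃ y ∈ Q, y ≤ x}

namespace Stmt7

variable {E : Type*} [Fintype E] [DecidableEq E]

/-- The nonnegative cone. -/
def C (E : Type*) [Fintype E] : Set (E → ℝ) := {c : E → ℝ | 0 ≤ c}

lemma mem_C {c : E → ℝ} : c ∈ C E ↔ ∀ j, 0 ≤ c j := Iff.rfl

lemma zero_mem_C : (0 : E → ℝ) ∈ C E := Set.mem_setOf_eq ▸ le_rfl

lemma convex_C : Convex ℝ (C E) := by
  intro x hx y hy α β hα hβ hαβ
  intro j
  simp only [Pi.add_apply, Pi.smul_apply, smul_eq_mul]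
  have := hx j; have := hy j
  simp only [Pi.zero_apply] at *
  nlinarith

lemma dominant_eq (Q : Set (E → ℝ)) : dominant Q = Q + C E := by
  ext x
  constructor
  · rintro ⟨y, hy, hle⟩
    exact ⟨y, hy, x - y, fun j => by simpa using sub_nonneg.2 (hle j), by module⟩
  · rintro ⟨y, hy, c, hc, rfl⟩
    exact ⟨y, hy, fun j => le_add_of_nonneg_right (hc j)⟩

lemma subset_dominant {Q : Set (E → ℝ)} : Q ⊆ dominant Q :=
  fun x hx => ⟨x, hx, le_rfl⟩

lemma dominant_upward {Q : Set (E → ℝ)} {x x' : E → ℝ} (hx : x ∈ dominant Q) (h : x ≤ x') :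
    x' ∈ dominant Q := by
  obtain ⟨y, hy, hle⟩ := hx
  exact ⟨y, hy, hle.trans h⟩

lemma dominant_sum {k : ℕ} (hk : 0 < k) (Q : Fin k → Set (E → ℝ)) :
    dominant (∑ i, Q i) = ∑ i, dominant (Q i) := by
  have i0 : Fin k := ⟨0, hk⟩
  ext x
  rw [Set.mem_fintype_sum]
  constructor
  · rintro ⟨y, hy, hle⟩
    rw [Set.mem_fintype_sum] at hy
    obtain ⟨g, hg, rfl⟩ := hy
    refine ⟨fun i => g i + (if i = i0 then x - ∑ j, g j else 0), fun i => ?_, ?_⟩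
    · refine ⟨g i, hg i, ?_⟩
      dsimp only
      split_ifs with h
      · intro j; simpa using sub_nonneg.2 (hle j)
      · simp
    · rw [Finset.sum_add_distrib, Finset.sum_ite_eq' Finset.univ i0]
      simp only [Finset.mem_univ, if_true]
      abel
  · rintro ⟨g, hg, rfl⟩
    choose y hy hle using hg
    refine ⟨∑ i, y i, ?_, ?_⟩
    · rw [Set.mem_fintype_sum]; exact ⟨y, hy, rfl⟩
    · intro j
      simp only [Finset.sum_apply]
      exact Finset.sum_le_sum fun i _ => hle i j

lemma not_le_of_extreme {D : Set (E → ℝ)} (hup : ∀ x ∈ D, ∀ x', x ≤ x' → x' ∈ D)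
    {a b : E → ℝ} (hab : a ≠ b) (hex : IsExtreme ℝ D (segment ℝ a b)) : ¬ a ≤ b := by
  intro hle
  have hbD : b ∈ D := hex.1 (right_mem_segment ℝ a b)
  have haD : a ∈ D := hex.1 (left_mem_segment ℝ a b)
  have h2 : (2:ℝ) • b - a ∈ D := by
    refine hup b hbD _ fun j => ?_
    have := hle j
    simp only [Pi.sub_apply, Pi.smul_apply, smul_eq_mul]
    linarith
  have hmem : b ∈ openSegment ℝ a ((2:ℝ) • b - a) :=
    ⟨1/2, 1/2, by norm_num, by norm_num, by norm_num, by module⟩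
  have := (hex.right_mem_of_mem_openSegment haD h2 (right_mem_segment ℝ a b) hmem)
  rw [segment_eq_image'] at this
  obtain ⟨θ, ⟨hθ0, hθ1⟩, hθ⟩ := this
  have hz : ((2:ℝ) - θ) • (b - a) = 0 := by
    have h' : ((2:ℝ) - θ) • (b - a) = ((2:ℝ) • b - a) - (a + θ • (b - a)) := by module
    rw [← hθ] at h'
    simpa using h'
  have hne : (2:ℝ) - θ ≠ 0 := by linarith
  have hba : b - a = 0 := by
    rcases smul_eq_zero.1 hz with h | h
    · exact absurd h hne
    · exact h
  exact hab (sub_eq_zero.1 hba).symm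

lemma mixed_sign {D : Set (E → ℝ)} (hup : ∀ x ∈ D, ∀ x', x ≤ x' → x' ∈ D)
    {a b : E → ℝ} (hab : a ≠ b) (hex : IsExtreme ℝ D (segment ℝ a b)) :
    (∃ j, (b - a) j < 0) ∧ (∃ j, 0 < (b - a) j) := by
  constructor
  · have h := not_le_of_extreme hup hab hex
    rw [Pi.le_def] at h
    push_neg at h
    obtain ⟨j, hj⟩ := h
    exact ⟨j, by simpa [sub_neg] using hj⟩
  · have h := not_le_of_extreme hup (Ne.symm hab) (by rwa [segment_symm] at hex)
    rw [Pi.le_def] at h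
    push_neg at h
    obtain ⟨j, hj⟩ := h
    exact ⟨j, by simpa [sub_pos] using hj⟩

lemma mem_extreme_of_pos_weight {S : Finset (E → ℝ)} {F : Set (E → ℝ)}
    (hex : IsExtreme ℝ (convexHull ℝ (↑S : Set (E → ℝ)) + C E) F)
    {p : E → ℝ} (hp : p ∈ F) {lam : (E → ℝ) → ℝ} (h0 : ∀ y ∈ S, 0 ≤ lam y)
    (h1 : ∑ y ∈ S, lam y = 1) {c : E → ℝ} (hc : c ∈ C E)
    (hdec : p = (∑ y ∈ S, lam y • y) + c) {s : E → ℝ} (hs : s ∈ S) (hpos : 0 < lam s) :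
    s ∈ F := by
  classical
  set t := lam s with ht
  have hsA : s ∈ convexHull ℝ (↑S : Set (E → ℝ)) + C E :=
    ⟨s, subset_convexHull ℝ _ hs, 0, zero_mem_C, add_zero s⟩
  have ht1 : t ≤ 1 := by
    rw [← h1, ← Finset.add_sum_erase _ _ hs]
    have : 0 ≤ ∑ y ∈ S.erase s, lam y :=
      Finset.sum_nonneg fun y hy => h0 y (Finset.mem_erase.1 hy).2
    linarith
  rcases eq_or_lt_of_le ht1 with heq | hlt
  · -- t = 1
    have hz : ∀ y ∈ S.erase s, lam y = 0 := by
      have hsum0 : ∑ y ∈ S.erase s, lam y = 0 := by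
        have := Finset.add_sum_erase S lam hs
        rw [h1] at this; linarith [this, heq]
      exact fun y hy => (Finset.sum_eq_zero_iff_of_nonneg
        (fun y hy => h0 y (Finset.mem_erase.1 hy).2)).1 hsum0 y hy
    have hps : p = s + c := by
      rw [hdec, ← Finset.add_sum_erase _ _ hs]
      have : ∑ y ∈ S.erase s, lam y • y = 0 :=
        Finset.sum_eq_zero fun y hy => by rw [hz y hy, zero_smul]
      have hls : lam s = (1:ℝ) := by rw [← ht]; exact heq
      rw [this, hls]
      simp
    have h2A : s + (2:ℝ) • c ∈ convexHull ℝ (↑S : Set (E → ℝ)) + C E :=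
      ⟨s, subset_convexHull ℝ _ hs, (2:ℝ) • c,
        fun j => by simpa using mul_nonneg (by norm_num : (0:ℝ) ≤ 2) (hc j), rfl⟩
    have hseg : p ∈ openSegment ℝ s (s + (2:ℝ) • c) := by
      refine ⟨1/2, 1/2, by norm_num, by norm_num, by norm_num, ?_⟩
      rw [hps]; module
    exact (hex.2 hsA h2A hp hseg)
  · -- t < 1
    have hne : (1:ℝ) - t ≠ 0 := by linarith
    set mu : (E → ℝ) → ℝ := fun y => if y = s then 0 else lam y / (1 - t) with hmu
    have hmusum : ∑ y ∈ S, mu y = 1 := by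
      rw [← Finset.add_sum_erase _ _ hs]
      simp only [hmu, if_pos rfl, zero_add]
      have : ∀ y ∈ S.erase s, (if y = s then 0 else lam y / (1 - t)) = lam y / (1 - t) :=
        fun y hy => if_neg (Finset.mem_erase.1 hy).1
      rw [Finset.sum_congr rfl this, ← Finset.sum_div]
      have : ∑ y ∈ S.erase s, lam y = 1 - t := by
        have := Finset.add_sum_erase S lam hs
        rw [h1] at this; linarith
      rw [this]; field_simp
    set lamz : (E → ℝ) → ℝ := fun y => if y = s then 0 else lam y with hlamz
    set z : E → ℝ := (∑ y ∈ S, mu y • y) + (1 / (1 - t)) • c with hzdef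
    have hzA : z ∈ convexHull ℝ (↑S : Set (E → ℝ)) + C E := by
      refine ⟨∑ y ∈ S, mu y • y, ?_, (1 / (1 - t)) • c,
        fun j => by simpa using mul_nonneg (by apply one_div_nonneg.2; linarith : (0:ℝ) ≤ 1/(1-t)) (hc j), rfl⟩
      rw [Finset.convexHull_eq]
      refine ⟨mu, fun y hy => ?_, hmusum, ?_⟩
      · simp only [hmu]; split_ifs with h
        · exact le_rfl
        · exact div_nonneg (h0 y hy) (by linarith)
      · rw [Finset.centerMass_eq_of_sum_1 _ _ hmusum]
        simp
    have key : p = t • s + (1 - t) • z := by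
      have h2 : (1 - t) • z = (∑ y ∈ S, lamz y • y) + c := by
        rw [hzdef, smul_add, Finset.smul_sum]
        congr 1
        · refine Finset.sum_congr rfl fun y hy => ?_
          rw [smul_smul]
          congr 1
          simp only [hmu, hlamz]
          split_ifs with h
          · simp
          · rw [mul_div_cancel₀ _ hne]
        · rw [smul_smul, mul_one_div, div_self hne, one_smul]
      have h4 : ∑ y ∈ S, lam y • y = t • s + ∑ y ∈ S.erase s, lam y • y := by
        rw [← Finset.add_sum_erase _ (fun y => lam y • y) hs, ht]
      have h5 : ∑ y ∈ S, lamz y • y = ∑ y ∈ S.erase s, lam y • y := by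
        rw [← Finset.add_sum_erase _ (fun y => lamz y • y) hs]
        have hz0 : lamz s = 0 := by simp [hlamz]
        rw [hz0, zero_smul, zero_add]
        exact Finset.sum_congr rfl fun y hy => by
          simp [hlamz, (Finset.mem_erase.1 hy).1]
      rw [hdec, h2, h5, h4]
      abel
    by_cases hsz : s = z
    · have : p = s := by rw [key, ← hsz]; module
      rwa [← this]
    · have hseg : p ∈ openSegment ℝ s z :=
        ⟨t, 1 - t, hpos, by linarith, by ring, key.symm⟩
      exact (hex.2 hsA hzA hp hseg)

noncomputable def dotL (h : E → ℝ) : (E → ℝ) →L[ℝ] ℝ :=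
  LinearMap.toContinuousLinearMap
    { toFun := fun x => ∑ j, h j * x j
      map_add' := by intro x y; simp [mul_add, Finset.sum_add_distrib]
      map_smul' := by
        intro c x
        simp only [Pi.smul_apply, smul_eq_mul, RingHom.id_apply, Finset.mul_sum]
        congr 1; ext j; ring }

lemma dotL_apply (h x : E → ℝ) : dotL h x = ∑ j, h j * x j := rfl

lemma f_eq_sum (f : (E → ℝ) →L[ℝ] ℝ) (x : E → ℝ) :
    f x = ∑ j, x j * f (Pi.single j 1) := by
  have hx : x = ∑ j, x j • (Pi.single j 1 : E → ℝ) := by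
    conv_lhs => rw [pi_eq_sum_univ x]
    congr 1; funext j; congr 1; funext i
    simp [Pi.single_apply, eq_comm]
  conv_lhs => rw [hx]
  rw [map_sum]
  congr 1; funext j
  rw [map_smul]; simp [smul_eq_mul]

lemma f_nonpos_on_C {f : (E → ℝ) →L[ℝ] ℝ} (hneg : ∀ j, f (Pi.single j 1) < 0)
    {c : E → ℝ} (hc : c ∈ C E) : f c ≤ 0 := by
  rw [f_eq_sum]
  refine Finset.sum_nonpos fun j _ => ?_
  exact mul_nonpos_of_nonneg_of_nonpos (hc j) (hneg j).le

lemma eq_zero_of_f_eq_zero {f : (E → ℝ) →L[ℝ] ℝ} (hneg : ∀ j, f (Pi.single j 1) < 0)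
    {c : E → ℝ} (hc : c ∈ C E) (h0 : f c = 0) : c = 0 := by
  rw [f_eq_sum] at h0
  have hall := (Finset.sum_eq_zero_iff_of_nonpos (fun j _ =>
    mul_nonpos_of_nonneg_of_nonpos (hc j) (hneg j).le)).1 h0
  funext j
  have := hall j (Finset.mem_univ j)
  have hj := (hneg j).ne
  have : c j = 0 := by
    rcases mul_eq_zero.1 this with h | h
    · exact h
    · exact absurd h hj
  simpa using this

lemma f_le_on_dominant {S : Finset (E → ℝ)} {f : (E → ℝ) →L[ℝ] ℝ}
    (hneg : ∀ j, f (Pi.single j 1) < 0) {cmax : ℝ} (hb : ∀ s ∈ S, f s ≤ cmax) :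
    ∀ x ∈ dominant (convexHull ℝ (↑S : Set (E → ℝ))), f x ≤ cmax := by
  intro x hx
  obtain ⟨y, hy, hle⟩ := hx
  have hyb : f y ≤ cmax := by
    have hsub : (↑S : Set (E → ℝ)) ⊆ (⇑f) ⁻¹' Set.Iic cmax := fun s hs => hb s hs
    have hconv : Convex ℝ ((⇑f) ⁻¹' Set.Iic cmax) :=
      (convex_Iic cmax).linear_preimage (f : (E → ℝ) →ₗ[ℝ] ℝ)
    exact convexHull_min hsub hconv hy
  have : f x = f y + f (x - y) := by rw [← map_add]; congr 1; abel
  have hnn : f (x - y) ≤ 0 := f_nonpos_on_C hneg (fun j => by simpa using sub_nonneg.2 (hle j))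
  linarith

lemma argmax_isExtreme (A : Set (E → ℝ)) (f : (E → ℝ) →L[ℝ] ℝ) :
    IsExtreme ℝ A {x ∈ A | ∀ y ∈ A, f y ≤ f x} := by
  constructor
  · exact Set.sep_subset _ _
  · rintro x₁ hx₁ x₂ hx₂ x ⟨hxA, hmax⟩ ⟨t₁, t₂, ht₁, ht₂, hsum, hcomb⟩
    have h1 : f x₁ ≤ f x := hmax x₁ hx₁
    have h2 : f x₂ ≤ f x := hmax x₂ hx₂
    have hfx : f x = t₁ * f x₁ + t₂ * f x₂ := by
      rw [← hcomb, map_add, map_smul, map_smul]; simp [smul_eq_mul]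
    have e : t₁ * (f x - f x₁) + t₂ * (f x - f x₂) = 0 := by
      linear_combination f x * hsum + hfx
    have l1 : t₁ * (f x - f x₁) = 0 := by
      nlinarith [mul_nonneg ht₁.le (sub_nonneg.2 h1), mul_nonneg ht₂.le (sub_nonneg.2 h2)]
    have l2 : t₂ * (f x - f x₂) = 0 := by
      nlinarith [mul_nonneg ht₁.le (sub_nonneg.2 h1), mul_nonneg ht₂.le (sub_nonneg.2 h2)]
    have he1 : f x₁ = f x := by
      rcases mul_eq_zero.1 l1 with h | h
      · exact absurd h ht₁.ne'
      · linarith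
    have he2 : f x₂ = f x := by
      rcases mul_eq_zero.1 l2 with h | h
      · exact absurd h ht₂.ne'
      · linarith
    exact ⟨hx₁, fun y hy => he1 ▸ hmax y hy⟩

lemma argmax_dominant {S : Finset (E → ℝ)} (hS : S.Nonempty) (f : (E → ℝ) →L[ℝ] ℝ)
    (hneg : ∀ j, f (Pi.single j 1) < 0) :
    ∃ T : Finset (E → ℝ), T.Nonempty ∧ (↑T : Set (E → ℝ)) ⊆ ↑S ∧
      {x ∈ dominant (convexHull ℝ (↑S : Set (E → ℝ))) |
          ∀ y ∈ dominant (convexHull ℝ (↑S : Set (E → ℝ))), f y ≤ f x}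
        = convexHull ℝ (↑T : Set (E → ℝ)) ∧
      ∀ s ∈ T, ∀ s' ∈ S, f s' ≤ f s := by
  classical
  set c : ℝ := (S.image f).max' (hS.image f) with hc
  have hcb : ∀ s ∈ S, f s ≤ c := fun s hs =>
    Finset.le_max' _ _ (Finset.mem_image_of_mem f hs)
  obtain ⟨s₀, hs₀S, hs₀⟩ : ∃ s₀ ∈ S, f s₀ = c := by
    have := Finset.max'_mem (S.image f) (hS.image f)
    rw [Finset.mem_image] at this
    exact this
  set T : Finset (E → ℝ) := S.filter (fun s => f s = c) with hT
  have hTS : (↑T : Set (E → ℝ)) ⊆ ↑S := fun x hx => Finset.mem_coe.2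
    (Finset.mem_of_mem_filter _ (Finset.mem_coe.1 hx))
  have hTne : T.Nonempty := ⟨s₀, Finset.mem_filter.2 ⟨hs₀S, hs₀⟩⟩
  refine ⟨T, hTne, hTS, ?_, fun s hsT s' hs' => by
    rw [(Finset.mem_filter.1 hsT).2]; exact hcb s' hs'⟩
  have hbound := f_le_on_dominant hneg hcb
  have hs₀A : s₀ ∈ dominant (convexHull ℝ (↑S : Set (E → ℝ))) :=
    subset_dominant (subset_convexHull ℝ _ hs₀S)
  ext x
  constructor
  · rintro ⟨hxA, hmax⟩
    have hfx : f x = c := le_antisymm (hbound x hxA) (hs₀ ▸ hmax s₀ hs₀A)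
    rw [dominant_eq] at hxA
    obtain ⟨p, hp, cc, hcc, rfl⟩ := hxA
    have hfp : f p ≤ c := by
      have : p ∈ dominant (convexHull ℝ (↑S : Set (E → ℝ))) := subset_dominant hp
      exact hbound p this
    have hfcc : f cc ≤ 0 := f_nonpos_on_C hneg hcc
    have hadd : f p + f cc = c := by rw [← map_add]; exact hfx
    have hfp' : f p = c := by linarith
    have hcc0 : cc = 0 := eq_zero_of_f_eq_zero hneg hcc (by linarith)
    rw [hcc0]
    show p + 0 ∈ convexHull ℝ (↑T : Set (E → ℝ))
    rw [add_zero]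
    -- p ∈ conv S with f p = c ⇒ p ∈ conv T
    rw [Finset.convexHull_eq] at hp
    obtain ⟨lam, h0, h1, hcm⟩ := hp
    rw [Finset.centerMass_eq_of_sum_1 _ _ h1] at hcm
    simp only [id] at hcm
    have hzero : ∀ y ∈ S, y ∉ T → lam y = 0 := by
      intro y hyS hyT
      have hterm : ∑ y ∈ S, lam y * (c - f y) = 0 := by
        have hfp2 : f p = ∑ y ∈ S, lam y * f y := by
          rw [← hcm, map_sum]
          exact Finset.sum_congr rfl fun y _ => by rw [map_smul]; simp [smul_eq_mul]
        have hsum : ∑ y ∈ S, lam y * (c - f y)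
            = c * (∑ y ∈ S, lam y) - ∑ y ∈ S, lam y * f y := by
          rw [Finset.mul_sum, ← Finset.sum_sub_distrib]
          exact Finset.sum_congr rfl fun y _ => by ring
        rw [hsum, h1, mul_one, ← hfp2, hfp']
        ring
      have hnn : ∀ y ∈ S, 0 ≤ lam y * (c - f y) := fun y hy =>
        mul_nonneg (h0 y hy) (sub_nonneg.2 (hcb y hy))
      have := (Finset.sum_eq_zero_iff_of_nonneg hnn).1 hterm y hyS
      have hfy : f y ≠ c := fun h => hyT (Finset.mem_filter.2 ⟨hyS, h⟩)
      rcases mul_eq_zero.1 this with h | h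
      · exact h
      · exact absurd (by linarith [sub_eq_zero.1 h] : f y = c) hfy
    rw [Finset.convexHull_eq]
    refine ⟨lam, fun y hy => h0 y (hTS hy), ?_, ?_⟩
    · rw [Finset.sum_filter]
      rw [← h1]
      refine Finset.sum_congr rfl fun y hy => ?_
      split_ifs with h
      · rfl
      · exact (hzero y hy (fun hmem => h (Finset.mem_filter.1 hmem).2)).symm
    · rw [Finset.centerMass_eq_of_sum_1]
      · simp only [id]
        rw [← hcm, Finset.sum_filter]
        refine Finset.sum_congr rfl fun y hy => ?_
        split_ifs with h
        · rfl
        · rw [hzero y hy (fun hmem => h (Finset.mem_filter.1 hmem).2), zero_smul]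
      · rw [Finset.sum_filter, ← h1]
        refine Finset.sum_congr rfl fun y hy => ?_
        split_ifs with h
        · rfl
        · exact (hzero y hy (fun hmem => h (Finset.mem_filter.1 hmem).2)).symm
  · intro hx
    have hxc : f x = c := by
      have hsub : (↑T : Set (E → ℝ)) ⊆ (⇑f) ⁻¹' {c} := by
        intro s hsT
        exact (Finset.mem_filter.1 (Finset.mem_coe.1 hsT)).2
      have hconv : Convex ℝ ((⇑f) ⁻¹' {c}) :=
        (convex_singleton c).linear_preimage (f : (E → ℝ) →ₗ[ℝ] ℝ)
      exact convexHull_min hsub hconv hx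
    have hxA : x ∈ dominant (convexHull ℝ (↑S : Set (E → ℝ))) :=
      subset_dominant (convexHull_mono hTS hx)
    exact ⟨hxA, fun y hy => by rw [hxc]; exact hbound y hy⟩

lemma argmax_sum {k : ℕ} (A : Fin k → Set (E → ℝ)) (f : (E → ℝ) →L[ℝ] ℝ)
    (hatt : ∀ i, ∃ x ∈ A i, ∀ y ∈ A i, f y ≤ f x) :
    {x ∈ ∑ i, A i | ∀ y ∈ ∑ i, A i, f y ≤ f x}
      = ∑ i, {x ∈ A i | ∀ y ∈ A i, f y ≤ f x} := by
  classical
  ext x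
  constructor
  · rintro ⟨hxA, hmax⟩
    rw [Set.mem_fintype_sum] at hxA
    obtain ⟨g, hg, rfl⟩ := hxA
    rw [Set.mem_fintype_sum]
    refine ⟨g, fun i => ⟨hg i, fun y hy => ?_⟩, rfl⟩
    have hup : ∑ j, Function.update g i y j ∈ ∑ j, A j := by
      rw [Set.mem_fintype_sum]
      refine ⟨Function.update g i y, fun j => ?_, rfl⟩
      by_cases h : j = i
      · subst h; rw [Function.update_self]; exact hy
      · rw [Function.update_of_ne h]; exact hg j
    have := hmax _ hup
    rw [Finset.sum_update_of_mem (Finset.mem_univ i)] at this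
    rw [← Finset.add_sum_erase _ g (Finset.mem_univ i)] at this
    rw [Finset.sdiff_singleton_eq_erase] at this
    rw [map_add, map_add] at this
    linarith
  · intro hx
    rw [Set.mem_fintype_sum] at hx
    obtain ⟨g, hg, rfl⟩ := hx
    refine ⟨?_, ?_⟩
    · rw [Set.mem_fintype_sum]
      exact ⟨g, fun i => (hg i).1, rfl⟩
    · intro y hy
      rw [Set.mem_fintype_sum] at hy
      obtain ⟨g', hg', rfl⟩ := hy
      rw [map_sum, map_sum]
      exact Finset.sum_le_sum fun i _ => (hg i).2 (g' i) (hg' i)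

lemma seg_of_line {S : Set (E → ℝ)} {p d : E → ℝ} (hd : d ≠ 0) (hS : IsCompact S)
    (hconv : Convex ℝ S) (hne : S.Nonempty) (hline : ∀ x ∈ S, ∃ t : ℝ, x = p + t • d) :
    ∃ a b : E → ℝ, ∃ τ : ℝ, S = segment ℝ a b ∧ b - a = τ • d := by
  classical
  set φ : ℝ → (E → ℝ) := fun t => p + t • d with hφ
  have hφcont : Continuous φ := by
    apply Continuous.add continuous_const
    exact continuous_id.smul continuous_const
  have hφinj : Function.Injective φ := by
    intro t t' h
    have : t • d = t' • d := by
      have := congrArg (fun x => x - p) h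
      simpa [hφ] using this
    have hsub : (t - t') • d = 0 := by rw [sub_smul, this, sub_self]
    rcases smul_eq_zero.1 hsub with h' | h'
    · linarith [sub_eq_zero.1 h']
    · exact absurd h' hd
  set T : Set ℝ := φ ⁻¹' S with hT
  have hTim : S = φ '' T := by
    apply Set.eq_of_subset_of_subset
    · intro x hx
      obtain ⟨t, ht⟩ := hline x hx
      have htT : t ∈ T := by
        show φ t ∈ S
        show p + t • d ∈ S
        exact ht ▸ hx
      exact ⟨t, htT, ht.symm⟩
    · rintro x ⟨t, ht, rfl⟩
      exact ht
  have hTne : T.Nonempty := by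
    obtain ⟨x, hx⟩ := hne
    obtain ⟨t, ht⟩ := hline x hx
    refine ⟨t, ?_⟩
    show p + t • d ∈ S
    exact ht ▸ hx
  have hTconv : Convex ℝ T := by
    intro t ht t' ht' a b ha hb hab
    have hmem : a • φ t + b • φ t' ∈ S := hconv ht ht' ha hb hab
    have h2 : φ (a • t + b • t') = a • φ t + b • φ t' := by
      show p + (a • t + b • t') • d = a • (p + t • d) + b • (p + t' • d)
      have h3 : a • (p + t • d) + b • (p + t' • d) = (a + b) • p + (a * t + b * t') • d := by
        module
      rw [h3, hab, one_smul, smul_eq_mul, smul_eq_mul]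
    show φ (a • t + b • t') ∈ S
    rw [h2]; exact hmem
  have hTclosed : IsClosed T := hS.isClosed.preimage hφcont
  have hTbdd : ∃ M : ℝ, ∀ t ∈ T, |t| ≤ M := by
    obtain ⟨r, hr⟩ := hS.isBounded.subset_closedBall 0
    refine ⟨(r + ‖p‖) / ‖d‖, fun t ht => ?_⟩
    have hx : φ t ∈ S := ht
    have h1 : ‖φ t‖ ≤ r := by
      have := hr hx
      rwa [Metric.mem_closedBall, dist_zero_right] at this
    have h2 : ‖t • d‖ ≤ r + ‖p‖ := by
      have : t • d = φ t - p := by simp [hφ]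
      rw [this]
      calc ‖φ t - p‖ ≤ ‖φ t‖ + ‖p‖ := norm_sub_le _ _
        _ ≤ r + ‖p‖ := by linarith
    rw [norm_smul, Real.norm_eq_abs] at h2
    have hdpos : 0 < ‖d‖ := norm_pos_iff.2 hd
    rw [le_div_iff₀ hdpos]
    exact h2
  obtain ⟨M, hM⟩ := hTbdd
  have hTsub : T ⊆ Set.Icc (-M) M := fun t ht => by
    have := hM t ht
    constructor <;> [linarith [neg_abs_le t]; linarith [le_abs_self t]]
  have hTcompact : IsCompact T := isCompact_Icc.of_isClosed_subset hTclosed hTsub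
  set α := sInf T with hα
  set β := sSup T with hβ
  have hαT : α ∈ T := hTcompact.sInf_mem hTne
  have hβT : β ∈ T := hTcompact.sSup_mem hTne
  have hTbddAbove : BddAbove T := hTcompact.bddAbove
  have hTbddBelow : BddBelow T := hTcompact.bddBelow
  have hTIcc : T = Set.Icc α β := by
    apply Set.eq_of_subset_of_subset
    · intro t ht
      exact ⟨csInf_le hTbddBelow ht, le_csSup hTbddAbove ht⟩
    · exact hTconv.ordConnected.out hαT hβT
  have hαβ : α ≤ β := csInf_le_csSup hTne hTbddBelow hTbddAbove
  refine ⟨φ α, φ β, β - α, ?_, by simp only [hφ]; module⟩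
  rw [hTim, hTIcc]
  apply Set.eq_of_subset_of_subset
  · rintro x ⟨t, ⟨ht1, ht2⟩, rfl⟩
    rcases eq_or_lt_of_le hαβ with he | hlt
    · have : t = α := le_antisymm (he ▸ ht2) ht1
      rw [this]
      exact left_mem_segment ℝ _ _
    · rw [segment_eq_image']
      refine ⟨(t - α) / (β - α), ⟨div_nonneg (by linarith) (by linarith), ?_⟩, ?_⟩
      · rw [div_le_one (by linarith)]; linarith
      · have hφβα : φ β - φ α = (β - α) • d := by simp only [hφ]; module
        show φ α + ((t - α) / (β - α)) • (φ β - φ α) = φ t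
        rw [hφβα, smul_smul, div_mul_cancel₀ _ (by linarith : β - α ≠ 0)]
        show (p + α • d) + (t - α) • d = p + t • d
        module
  · rw [segment_eq_image']
    rintro x ⟨θ, ⟨hθ0, hθ1⟩, rfl⟩
    refine ⟨α + θ * (β - α), ⟨by nlinarith, by nlinarith⟩, ?_⟩
    have hφβα : φ β - φ α = (β - α) • d := by simp only [hφ]; module
    show φ (α + θ * (β - α)) = φ α + θ • (φ β - φ α)
    rw [hφβα, smul_smul]
    show p + (α + θ * (β - α)) • d = (p + α • d) + (θ * (β - α)) • d
    module

lemma sum_compact_convex_nonempty {ι : Type*} (t : Finset ι) (A : ι → Set (E → ℝ))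
    (h : ∀ j ∈ t, IsCompact (A j) ∧ Convex ℝ (A j) ∧ (A j).Nonempty) :
    IsCompact (∑ j ∈ t, A j) ∧ Convex ℝ (∑ j ∈ t, A j) ∧ (∑ j ∈ t, A j).Nonempty := by
  classical
  induction t using Finset.induction_on with
  | empty =>
    simp only [Finset.sum_empty]
    have h0 : (0 : Set (E → ℝ)) = {0} := rfl
    refine ⟨?_, ?_, ?_⟩
    · rw [h0]; exact isCompact_singleton
    · rw [h0]; exact convex_singleton 0
    · rw [h0]; exact Set.singleton_nonempty 0
  | insert j s hj ih =>
    rw [Finset.sum_insert hj]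
    have hA := h j (Finset.mem_insert_self j s)
    have hrest := ih fun i hi => h i (Finset.mem_insert_of_mem hi)
    exact ⟨hA.1.add hrest.1, hA.2.1.add hrest.2.1, hA.2.2.add hrest.2.2⟩

lemma dot_self_pos {d : E → ℝ} (hd : d ≠ 0) : 0 < ∑ j, d j * d j := by
  have hne : ∃ j, d j ≠ 0 := by
    by_contra h
    push_neg at h
    exact hd (funext h)
  obtain ⟨j0, hj0⟩ := hne
  have : (0:ℝ) < d j0 * d j0 := mul_self_pos.2 hj0
  refine lt_of_lt_of_le this ?_
  refine Finset.single_le_sum (fun j _ => mul_self_nonneg (d j)) (Finset.mem_univ j0)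

/-- Base case: the whole set lies on a line parallel to `b - a`. -/
lemma L1base {a b : E → ℝ} {K : Set (E → ℝ)} (hab : a ≠ b) (hK : IsCompact K)
    (hKconv : Convex ℝ K) (hKne : K.Nonempty)
    (hsp : vectorSpan ℝ (segment ℝ a b + K) ≤ Submodule.span ℝ {b - a}) :
    ∃ u v, u ≠ v ∧ IsExtreme ℝ (segment ℝ a b + K) (segment ℝ u v) ∧
      ∃ t : ℝ, t ≠ 0 ∧ v - u = t • (b - a) := by
  obtain ⟨c₀, hc₀⟩ := hKne
  set d := b - a with hd
  have hdne : d ≠ 0 := sub_ne_zero.2 (Ne.symm hab)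
  set K' := segment ℝ a b + K with hK'
  have haK' : a + c₀ ∈ K' := ⟨a, left_mem_segment ℝ a b, c₀, hc₀, rfl⟩
  have hbK' : b + c₀ ∈ K' := ⟨b, right_mem_segment ℝ a b, c₀, hc₀, rfl⟩
  have hcomp : IsCompact K' := by
    apply IsCompact.add _ hK
    rw [segment_eq_image']
    exact isCompact_Icc.image (by
      apply Continuous.add continuous_const
      exact continuous_id.smul continuous_const)
  have hconv : Convex ℝ K' := (convex_segment a b).add hKconv
  have hline : ∀ x ∈ K', ∃ t : ℝ, x = (a + c₀) + t • d := by
    intro x hx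
    have : x - (a + c₀) ∈ vectorSpan ℝ K' := vsub_mem_vectorSpan ℝ hx haK'
    have := hsp this
    rw [Submodule.mem_span_singleton] at this
    obtain ⟨t, ht⟩ := this
    exact ⟨t, by rw [ht]; abel⟩
  obtain ⟨u, v, τ, hseg, hτ⟩ := seg_of_line hdne hcomp hconv ⟨a + c₀, haK'⟩ hline
  have huv : u ≠ v := by
    intro h
    rw [h, segment_same] at hseg
    have h1 := haK'
    have h2 := hbK'
    rw [hseg] at h1 h2
    rw [Set.mem_singleton_iff] at h1 h2
    exact hab (by rw [← add_left_inj c₀, h1, h2])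
  have hτne : τ ≠ 0 := by
    intro h
    rw [h, zero_smul, sub_eq_zero] at hτ
    exact huv hτ.symm
  exact ⟨u, v, huv, hseg ▸ IsExtreme.refl ℝ K', τ, hτne, hτ⟩

lemma segment_add_compact_has_edge (n : ℕ) :
    ∀ (a b : E → ℝ) (K : Set (E → ℝ)), a ≠ b → IsCompact K → Convex ℝ K → K.Nonempty →
      Module.finrank ℝ (vectorSpan ℝ (segment ℝ a b + K)) ≤ n →
      ∃ u v, u ≠ v ∧ IsExtreme ℝ (segment ℝ a b + K) (segment ℝ u v) ∧
        ∃ t : ℝ, t ≠ 0 ∧ v - u = t • (b - a) := by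
  induction n with
  | zero =>
    intro a b K hab hK hKconv hKne hrank
    apply L1base hab hK hKconv hKne
    have h0 : Module.finrank ℝ (vectorSpan ℝ (segment ℝ a b + K)) = 0 := Nat.le_zero.1 hrank
    rw [Submodule.finrank_eq_zero] at h0
    rw [h0]
    exact bot_le
  | succ n ih =>
    intro a b K hab hK hKconv hKne hrank
    set d := b - a with hd
    set K' := segment ℝ a b + K with hK'def
    by_cases hsp : vectorSpan ℝ K' ≤ Submodule.span ℝ {d}
    · exact L1base hab hK hKconv hKne hsp
    · obtain ⟨z, hzspan, hznot⟩ := SetLike.not_le_iff_exists.1 hsp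
      have hdne : d ≠ 0 := sub_ne_zero.2 (Ne.symm hab)
      -- Gram-Schmidt: w2 ⊥ d with ⟨w2, z⟩ ≠ 0
      set c : ℝ := (∑ j, z j * d j) / (∑ j, d j * d j) with hc
      set w2 : E → ℝ := z - c • d with hw2
      have hddpos : 0 < ∑ j, d j * d j := dot_self_pos hdne
      have hw2ne : w2 ≠ 0 := by
        intro h
        apply hznot
        rw [Submodule.mem_span_singleton]
        refine ⟨c, ?_⟩
        rw [hw2, sub_eq_zero] at h
        exact h.symm
      set g : (E → ℝ) →L[ℝ] ℝ := dotL w2 with hg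
      have hgd : g d = 0 := by
        rw [hg, dotL_apply]
        have : ∀ j, w2 j * d j = z j * d j - c * (d j * d j) := by
          intro j; rw [hw2]; simp [Pi.sub_apply, Pi.smul_apply, smul_eq_mul]; ring
        rw [Finset.sum_congr rfl fun j _ => this j, Finset.sum_sub_distrib,
          ← Finset.mul_sum, hc, div_mul_cancel₀ _ hddpos.ne']
        ring
      have hgz : g z ≠ 0 := by
        rw [hg, dotL_apply]
        have hzw : ∀ j, w2 j * z j = w2 j * w2 j + c * (w2 j * d j) := by
          intro j; rw [hw2]; simp [Pi.sub_apply, Pi.smul_apply, smul_eq_mul]; ring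
        rw [Finset.sum_congr rfl fun j _ => hzw j, Finset.sum_add_distrib, ← Finset.mul_sum]
        have hw2d : ∑ j, w2 j * d j = 0 := by rw [← dotL_apply, ← hg]; exact hgd
        rw [hw2d, mul_zero, add_zero]
        exact (dot_self_pos hw2ne).ne'
      -- g is constant on the segment
      have hgseg : ∀ s ∈ segment ℝ a b, g s = g a := by
        intro s hs
        rw [segment_eq_image'] at hs
        obtain ⟨θ, _, rfl⟩ := hs
        rw [map_add, map_smul]
        rw [← hd, hgd]
        simp
      -- the argmax of g over K
      obtain ⟨y₀, hy₀K, hy₀max⟩ := hK.exists_isMaxOn hKne g.continuous.continuousOn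
      rw [isMaxOn_iff] at hy₀max
      set K'' : Set (E → ℝ) := {x ∈ K | ∀ y ∈ K, g y ≤ g x} with hK''
      have hy₀K'' : y₀ ∈ K'' := ⟨hy₀K, hy₀max⟩
      have hK''eq : K'' = K ∩ (⇑g) ⁻¹' {g y₀} := by
        apply Set.eq_of_subset_of_subset
        · rintro x ⟨hxK, hxmax⟩
          exact ⟨hxK, le_antisymm (hy₀max x hxK) (hxmax y₀ hy₀K)⟩
        · rintro x ⟨hxK, hxval⟩
          refine ⟨hxK, fun y hy => ?_⟩
          rw [Set.mem_preimage, Set.mem_singleton_iff] at hxval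
          rw [hxval]
          exact hy₀max y hy
      have hK''comp : IsCompact K'' := by
        rw [hK''eq]
        exact hK.inter_right (isClosed_singleton.preimage g.continuous)
      have hK''conv : Convex ℝ K'' := by
        rw [hK''eq]
        refine hKconv.inter ?_
        intro x hx y hy p q hp hq hpq
        rw [Set.mem_preimage, Set.mem_singleton_iff] at *
        rw [map_add, map_smul, map_smul, hx, hy]
        simp [smul_eq_mul]
        rw [← add_mul, hpq, one_mul]
      have hK''ne : K''.Nonempty := ⟨y₀, hy₀K''⟩
      -- the argmax face of K'
      set F : Set (E → ℝ) := {x ∈ K' | ∀ y ∈ K', g y ≤ g x} with hF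
      have hFeq : F = segment ℝ a b + K'' := by
        apply Set.eq_of_subset_of_subset
        · rintro x ⟨⟨s, hs, y, hy, rfl⟩, hmax⟩
          refine ⟨s, hs, y, ⟨hy, fun y' hy' => ?_⟩, rfl⟩
          have h1 : s + y' ∈ K' := ⟨s, hs, y', hy', rfl⟩
          have := hmax _ h1
          rw [map_add, map_add] at this
          exact le_of_add_le_add_left this
        · rintro x ⟨s, hs, y, ⟨hyK, hymax⟩, rfl⟩
          refine ⟨⟨s, hs, y, hyK, rfl⟩, ?_⟩
          rintro x' ⟨s', hs', y', hy', rfl⟩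
          rw [map_add, map_add, hgseg s hs, hgseg s' hs']
          have := hymax y' hy'
          linarith
      have hFex : IsExtreme ℝ K' F := argmax_isExtreme K' g
      -- strict decrease of span
      have hFsub : F ⊆ K' := Set.sep_subset _ _
      have hle : vectorSpan ℝ F ≤ vectorSpan ℝ K' := vectorSpan_mono ℝ hFsub
      have hgconstF : ∀ x ∈ F, ∀ y ∈ F, g x = g y := by
        rintro x ⟨hxK', hxmax⟩ y ⟨hyK', hymax⟩
        exact le_antisymm (hymax x hxK') (hxmax y hyK')
      have hne : vectorSpan ℝ F ≠ vectorSpan ℝ K' := by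
        intro heq
        have hker : vectorSpan ℝ F ≤ LinearMap.ker (g : (E → ℝ) →ₗ[ℝ] ℝ) := by
          rw [vectorSpan_def, Submodule.span_le]
          rintro _ ⟨x, hx, y, hy, rfl⟩
          rw [SetLike.mem_coe, LinearMap.mem_ker]
          have : g (x - y) = g x - g y := map_sub g x y
          rw [show ((g : (E → ℝ) →ₗ[ℝ] ℝ) (x -ᵥ y) : ℝ) = g (x - y) from rfl, this,
            hgconstF x hx y hy, sub_self]
        have : g z = 0 := by
          have := hker (heq ▸ hzspan)
          rwa [LinearMap.mem_ker] at this
        exact hgz this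
      have hlt : vectorSpan ℝ F < vectorSpan ℝ K' := lt_of_le_of_ne hle hne
      have hrk : Module.finrank ℝ (vectorSpan ℝ (segment ℝ a b + K'')) ≤ n := by
        rw [← hFeq]
        have h1 : Module.finrank ℝ (vectorSpan ℝ F) < Module.finrank ℝ (vectorSpan ℝ K') :=
          Submodule.finrank_lt_finrank_of_lt hlt
        omega
      obtain ⟨u, v, huv, hexF, t, htne, hvu⟩ := ih a b K'' hab hK''comp hK''conv hK''ne hrk
      rw [← hFeq] at hexF
      exact ⟨u, v, huv, hFex.trans hexF, t, htne, hvu⟩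

lemma exposing_functional [Nonempty E] {S : Finset (E → ℝ)} {a b : E → ℝ} (hab : a ≠ b)
    (hex : IsExtreme ℝ (dominant (convexHull ℝ (↑S : Set (E → ℝ)))) (segment ℝ a b)) :
    ∃ f : (E → ℝ) →L[ℝ] ℝ, (∀ j, f (Pi.single j 1) < 0) ∧ f (b - a) = 0 ∧
      ∀ s ∈ S, f s ≤ f a ∧ (f s = f a → ∃ t : ℝ, s = a + t • (b - a)) := by
  classical
  set d : E → ℝ := b - a with hd
  set A : Set (E → ℝ) := dominant (convexHull ℝ (↑S : Set (E → ℝ))) with hA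
  have hup : ∀ x ∈ A, ∀ x', x ≤ x' → x' ∈ A := fun x hx x' h => dominant_upward hx h
  obtain ⟨⟨jm, hjm⟩, ⟨jp, hjp⟩⟩ := mixed_sign hup hab hex
  have hdne : d ≠ 0 := sub_ne_zero.2 (Ne.symm hab)
  have haA : a ∈ A := hex.1 (left_mem_segment ℝ a b)
  have hbA : b ∈ A := hex.1 (right_mem_segment ℝ a b)
  set L : Set (E → ℝ) := {x | ∃ t : ℝ, x = a + t • d} with hL
  -- A ∩ L ⊆ [a,b]
  have hLA : ∀ x ∈ A, x ∈ L → x ∈ segment ℝ a b := by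
    rintro x hxA ⟨t, rfl⟩
    rcases le_or_gt t 1 with ht1 | ht1
    · rcases le_or_gt 0 t with ht0 | ht0
      · rw [segment_eq_image']
        exact ⟨t, ⟨ht0, ht1⟩, rfl⟩
      · -- t < 0 : a is between b and x
        exfalso
        set θ : ℝ := 1 / (1 - t) with hθ
        have h1t : (1:ℝ) < 1 - t := by linarith
        have hθ0 : 0 < θ := by positivity
        have hθ1 : θ < 1 := by rw [hθ, div_lt_one (by linarith)]; linarith
        have hamem : a ∈ openSegment ℝ b (a + t • d) := by
          refine ⟨1 - θ, θ, by linarith, hθ0, by ring, ?_⟩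
          have hbval : b = a + d := by rw [hd]; abel
          rw [hbval]
          have hcomb : (1 - θ) • (a + d) + θ • (a + t • d)
              = a + (1 - θ * (1 - t)) • d := by module
          rw [hcomb]
          have : θ * (1 - t) = 1 := by rw [hθ]; field_simp
          rw [this]
          simp
        have := (hex.right_mem_of_mem_openSegment hbA hxA (left_mem_segment ℝ a b) hamem)
        rw [segment_eq_image'] at this
        obtain ⟨t', ⟨ht'0, _⟩, heq⟩ := this
        have heq' : a + t' • (b - a) = a + t • d := heq
        have : (t - t') • d = 0 := by
          have h' : (t - t') • d = (a + t • d) - (a + t' • (b - a)) := by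
            rw [← hd]; module
          rw [heq'] at h'
          simpa using h'
        rcases smul_eq_zero.1 this with h' | h'
        · have : t = t' := by linarith [sub_eq_zero.1 h']
          linarith
        · exact hdne h'
    · -- t > 1 : b is between a and x
      exfalso
      have htne : t ≠ 0 := by linarith
      have hbmem : b ∈ openSegment ℝ a (a + t • d) := by
        refine ⟨1 - 1/t, 1/t, ?_, by positivity, by ring, ?_⟩
        · rw [sub_pos, div_lt_one (by linarith)]; linarith
        · have hcomb : (1 - 1/t) • a + (1/t) • (a + t • d) = a + ((1/t) * t) • d := by
            module
          rw [hcomb]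
          have : (1/t) * t = 1 := by field_simp
          rw [this, one_smul]
          rw [hd]; abel
      have := (hex.right_mem_of_mem_openSegment haA hxA (right_mem_segment ℝ a b) hbmem)
      rw [segment_eq_image'] at this
      obtain ⟨t', ⟨_, ht'1⟩, heq⟩ := this
      have heq' : a + t' • (b - a) = a + t • d := heq
      have : (t - t') • d = 0 := by
        have h' : (t - t') • d = (a + t • d) - (a + t' • (b - a)) := by
          rw [← hd]; module
        rw [heq'] at h'
        simpa using h'
      rcases smul_eq_zero.1 this with h' | h'
      · have : t = t' := by linarith [sub_eq_zero.1 h']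
        linarith
      · exact hdne h'
  -- the finite sets
  set Sf : Finset (E → ℝ) := S.filter (fun s => s ∉ L) with hSf
  set Sf' : Finset (E → ℝ) := Sf.image (fun s => s - a) with hSf'
  set Ef : Finset (E → ℝ) := Finset.univ.image (fun j : E => (Pi.single j 1 : E → ℝ)) with hEf
  set Tf : Finset (E → ℝ) := Sf' ∪ Ef with hTf
  set Z : Set (E → ℝ) := convexHull ℝ (↑Tf : Set (E → ℝ)) + (Submodule.span ℝ {d} : Set (E → ℝ))
    with hZ
  have hZconv : Convex ℝ Z := (convex_convexHull ℝ _).add (Submodule.span ℝ {d}).convex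
  have hZclosed : IsClosed Z :=
    IsClosed.add_left_of_isCompact (Submodule.span ℝ {d}).closed_of_finiteDimensional
      (Tf.finite_toSet.isCompact_convexHull ℝ)
  have h0Z : (0 : E → ℝ) ∉ Z := by
    rintro ⟨q, hq, z, hz, hsum⟩
    rw [SetLike.mem_coe, Submodule.mem_span_singleton] at hz
    obtain ⟨γ, rfl⟩ := hz
    have hqval : q = -γ • d := by
      rw [neg_smul]
      exact eq_neg_of_add_eq_zero_left hsum
    rw [Finset.convexHull_eq] at hq
    obtain ⟨lam, hl0, hl1, hcm⟩ := hq
    rw [Finset.centerMass_eq_of_sum_1 _ _ hl1] at hcm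
    simp only [id] at hcm
    have hdisj : Disjoint Sf' (Ef \ Sf') := Finset.disjoint_sdiff
    have hTsplit : Tf = Sf' ∪ (Ef \ Sf') := by
      rw [hTf, Finset.union_sdiff_self_eq_union]
    have hsumsplit : ∑ y ∈ Tf, lam y • y
        = ∑ y ∈ Sf', lam y • y + ∑ y ∈ Ef \ Sf', lam y • y := by
      rw [hTsplit, Finset.sum_union hdisj]
    have hwsplit : ∑ y ∈ Sf', lam y + ∑ y ∈ Ef \ Sf', lam y = 1 := by
      rw [← Finset.sum_union hdisj, ← hTsplit, hl1]
    set σ : ℝ := ∑ y ∈ Sf', lam y with hσdef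
    set cE : E → ℝ := ∑ y ∈ Ef \ Sf', lam y • y with hcE
    have hl0' : ∀ y ∈ Tf, 0 ≤ lam y := hl0
    have hEfnn : ∀ y ∈ Ef, (0:E→ℝ) ≤ y := by
      intro y hy
      rw [hEf, Finset.mem_image] at hy
      obtain ⟨j, _, rfl⟩ := hy
      intro i
      simp only [Pi.zero_apply]
      rcases eq_or_ne i j with h | h
      · subst h; rw [Pi.single_eq_same]; norm_num
      · rw [Pi.single_eq_of_ne h]
    have hcEC : cE ∈ C E := by
      intro i
      rw [hcE]
      simp only [Pi.zero_apply, Finset.sum_apply, Pi.smul_apply, smul_eq_mul]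
      refine Finset.sum_nonneg fun y hy => ?_
      have hyEf := Finset.mem_sdiff.1 hy
      exact mul_nonneg (hl0 y (hTsplit ▸ Finset.mem_union_right _ hy))
        (hEfnn y hyEf.1 i)
    have hcEsum : ∑ i, cE i = ∑ y ∈ Ef \ Sf', lam y := by
      rw [hcE]
      simp only [Finset.sum_apply, Pi.smul_apply, smul_eq_mul]
      rw [Finset.sum_comm]
      refine Finset.sum_congr rfl fun y hy => ?_
      rw [← Finset.mul_sum]
      have hyEf := (Finset.mem_sdiff.1 hy).1
      rw [hEf, Finset.mem_image] at hyEf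
      obtain ⟨j, _, rfl⟩ := hyEf
      have hone : ∑ i, (Pi.single j 1 : E → ℝ) i = 1 := by
        rw [Finset.sum_eq_single j (fun i _ hne => Pi.single_eq_of_ne hne 1) (by simp)]
        exact Pi.single_eq_same j 1
      rw [hone, mul_one]
    -- image sum
    have hinj : Set.InjOn (fun s => s - a) ↑Sf := fun x _ y _ h => by
      simpa [sub_left_inj] using h
    have himsum : ∑ y ∈ Sf', lam y • y = ∑ s ∈ Sf, lam (s - a) • (s - a) := by
      rw [hSf', Finset.sum_image (fun x hx y hy h => hinj hx hy h)]
    have himw : σ = ∑ s ∈ Sf, lam (s - a) := by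
      rw [hσdef, hSf', Finset.sum_image (fun x hx y hy h => hinj hx hy h)]
    set μ : (E → ℝ) → ℝ := fun s => lam (s - a) with hμ
    have hμ0 : ∀ s ∈ Sf, 0 ≤ μ s := by
      intro s hs
      exact hl0 _ (Finset.mem_union_left _ (Finset.mem_image_of_mem _ hs))
    have hmain : ∑ s ∈ Sf, μ s • (s - a) + cE = -γ • d := by
      rw [← himsum, hcE, ← hsumsplit, hcm]
      exact hqval
    rcases eq_or_lt_of_le (himw ▸ Finset.sum_nonneg fun s hs => hμ0 s hs : (0:ℝ) ≤ σ)
      with hσ0 | hσpos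
    · -- σ = 0
      have hμz : ∀ s ∈ Sf, μ s = 0 := by
        intro s hs
        have := (Finset.sum_eq_zero_iff_of_nonneg hμ0).1 (by rw [← himw, ← hσ0])
        exact this s hs
      have hcEq : cE = -γ • d := by
        rw [← hmain, Finset.sum_eq_zero fun s hs => by rw [hμz s hs, zero_smul]]
        rw [zero_add]
      have hwE : ∑ y ∈ Ef \ Sf', lam y = 1 := by
        rw [← hwsplit, ← hσ0, zero_add]
      have hsum1 : ∑ i, cE i = 1 := by rw [hcEsum, hwE]
      have hγ0 : γ ≠ 0 := by
        intro h
        rw [h, neg_zero, zero_smul] at hcEq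
        rw [hcEq] at hsum1
        simp at hsum1
      have hm : cE jm = -γ * d jm := by rw [hcEq]; simp
      have hp : cE jp = -γ * d jp := by rw [hcEq]; simp
      have h1 := hcEC jm
      have h2 := hcEC jp
      simp only [Pi.zero_apply] at h1 h2
      rw [hm] at h1
      rw [hp] at h2
      rcases lt_or_gt_of_ne hγ0 with h | h
      · nlinarith
      · nlinarith
    · -- σ > 0
      set p : E → ℝ := a - (γ / σ) • d with hp
      have hpL : p ∈ L := ⟨-(γ / σ), by rw [hp, neg_smul]; abel⟩
      have hexpand : ∑ s ∈ Sf, μ s • (s - a) = ∑ s ∈ Sf, μ s • s - σ • a := by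
        rw [himw, Finset.sum_smul, ← Finset.sum_sub_distrib]
        exact Finset.sum_congr rfl fun s _ => smul_sub _ _ _
      have hkey : ∑ s ∈ Sf, μ s • s + cE = σ • p := by
        have h1 : σ • p = σ • a - γ • d := by
          rw [hp, smul_sub, smul_smul, mul_div_cancel₀ _ hσpos.ne']
        rw [h1]
        have h2 := hmain
        rw [hexpand] at h2
        calc ∑ s ∈ Sf, μ s • s + cE
            = (∑ s ∈ Sf, μ s • s - σ • a + cE) + σ • a := by abel
          _ = -γ • d + σ • a := by rw [h2]
          _ = σ • a - γ • d := by rw [neg_smul]; abel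
      have hpdec : p = (∑ s ∈ Sf, (μ s / σ) • s) + (1/σ) • cE := by
        have : (1/σ) • (σ • p) = p := by
          rw [smul_smul, one_div_mul_cancel hσpos.ne', one_smul]
        rw [← this, ← hkey, smul_add, Finset.smul_sum]
        congr 1
        refine Finset.sum_congr rfl fun s _ => ?_
        rw [smul_smul, one_div_mul_eq_div]
      have hpA : p ∈ A := by
        rw [hA, dominant_eq]
        refine ⟨∑ s ∈ Sf, (μ s / σ) • s, ?_, (1/σ) • cE,
          fun i => by simpa using mul_nonneg (by positivity : (0:ℝ) ≤ 1/σ) (hcEC i), hpdec.symm⟩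
        have hsub2 : (↑Sf : Set (E → ℝ)) ⊆ ↑S := fun x hx =>
          Finset.mem_coe.2 (Finset.mem_of_mem_filter _ (Finset.mem_coe.1 hx))
        apply convexHull_mono hsub2
        rw [Finset.convexHull_eq]
        refine ⟨fun s => μ s / σ, fun s hs => div_nonneg (hμ0 s hs) hσpos.le, ?_, ?_⟩
        · rw [← Finset.sum_div, ← himw, div_self hσpos.ne']
        · rw [Finset.centerMass_eq_of_sum_1]
          · simp only [id_eq]
          · rw [← Finset.sum_div, ← himw, div_self hσpos.ne']
      have hpseg : p ∈ segment ℝ a b := hLA p hpA hpL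
      obtain ⟨s₀, hs₀Sf, hs₀pos⟩ : ∃ s ∈ Sf, 0 < μ s := by
        by_contra h
        push_neg at h
        have : σ ≤ 0 := himw ▸ Finset.sum_nonpos fun s hs => h s hs
        linarith
      have hs₀S : s₀ ∈ S := Finset.mem_of_mem_filter _ hs₀Sf
      have hs₀L : s₀ ∉ L := (Finset.mem_filter.1 hs₀Sf).2
      -- apply the support lemma
      have hex' : IsExtreme ℝ (convexHull ℝ (↑S : Set (E → ℝ)) + C E) (segment ℝ a b) := by
        rw [← dominant_eq]; exact hex
      set ν : (E → ℝ) → ℝ := fun s => if s ∈ Sf then μ s / σ else 0 with hν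
      have hSfsub : Sf ⊆ S := fun x hx => Finset.mem_of_mem_filter _ hx
      have hsum_eq : ∑ s ∈ S, ν s • s = ∑ s ∈ Sf, (μ s / σ) • s := by
        rw [← Finset.sum_subset hSfsub
          (fun x _ hnx => by simp only [hν]; rw [if_neg hnx, zero_smul])]
        exact Finset.sum_congr rfl fun s hs => by simp only [hν]; rw [if_pos hs]
      have hνdec : p = (∑ s ∈ S, ν s • s) + (1/σ) • cE := by
        rw [hpdec, hsum_eq]
      have hs₀seg : s₀ ∈ segment ℝ a b := by
        refine mem_extreme_of_pos_weight hex' hpseg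
          (fun y _ => by simp only [hν]; split_ifs with h; exacts [div_nonneg (hμ0 y h) hσpos.le, le_rfl])
          ?_ (fun i => by simpa using mul_nonneg (by positivity : (0:ℝ) ≤ 1/σ) (hcEC i))
          hνdec hs₀S ?_
        · have h1 : ∑ s ∈ S, ν s = ∑ s ∈ Sf, μ s / σ := by
            rw [← Finset.sum_subset hSfsub
              (fun x _ hnx => by simp only [hν]; rw [if_neg hnx])]
            exact Finset.sum_congr rfl fun s hs => by simp only [hν]; rw [if_pos hs]
          rw [h1, ← Finset.sum_div, ← himw, div_self hσpos.ne']
        · simp only [hν]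
          rw [if_pos hs₀Sf]
          positivity
      apply hs₀L
      rw [segment_eq_image'] at hs₀seg
      obtain ⟨θ, _, hθ⟩ := hs₀seg
      refine ⟨θ, ?_⟩
      rw [hd]
      exact hθ.symm
  -- separation
  obtain ⟨f, u, hfu, hu0⟩ := geometric_hahn_banach_closed_point hZconv hZclosed h0Z
  rw [map_zero] at hu0
  have hfT : ∀ y ∈ Tf, f y < u := by
    intro y hy
    refine hfu y ⟨y, subset_convexHull ℝ _ (Finset.mem_coe.2 hy), 0,
      (Submodule.span ℝ {d}).zero_mem, add_zero y⟩
  have hsingle : ∀ j, f (Pi.single j 1) < 0 := by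
    intro j
    have : (Pi.single j 1 : E → ℝ) ∈ Tf :=
      Finset.mem_union_right _ (Finset.mem_image_of_mem _ (Finset.mem_univ j))
    linarith [hfT _ this]
  have hfd : f d = 0 := by
    by_contra hfd0
    set j₀ : E := Classical.arbitrary E with hj₀
    set z₀ : E → ℝ := Pi.single j₀ 1 with hz₀
    have hz₀Tf : z₀ ∈ Tf :=
      Finset.mem_union_right _ (Finset.mem_image_of_mem _ (Finset.mem_univ j₀))
    have hall : ∀ r : ℝ, f z₀ + r * f d < u := by
      intro r
      have hmem : z₀ + r • d ∈ Z :=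
        ⟨z₀, subset_convexHull ℝ _ (Finset.mem_coe.2 hz₀Tf), r • d,
          (Submodule.span ℝ {d}).smul_mem r (Submodule.mem_span_singleton_self d), rfl⟩
      have := hfu _ hmem
      rwa [map_add, map_smul, smul_eq_mul] at this
    have := hall ((u - f z₀) / f d)
    rw [div_mul_cancel₀ _ hfd0] at this
    linarith
  refine ⟨f, hsingle, hfd, fun s hs => ?_⟩
  by_cases hsL : s ∈ L
  · obtain ⟨t, hts⟩ := hsL
    have : f s = f a + t * f d := by rw [hts, map_add, map_smul, smul_eq_mul]
    rw [hfd, mul_zero, add_zero] at this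
    exact ⟨this.le, fun _ => ⟨t, hts⟩⟩
  · have hmem : s - a ∈ Tf :=
      Finset.mem_union_left _ (Finset.mem_image_of_mem _ (Finset.mem_filter.2 ⟨hs, hsL⟩))
    have := hfT _ hmem
    rw [map_sub] at this
    constructor
    · linarith
    · intro heq
      exfalso
      linarith

lemma fwd {k : ℕ} (A : Fin k → Set (E → ℝ)) (hconv : ∀ i, Convex ℝ (A i))
    {u v : E → ℝ} (huv : u ≠ v) (hex : IsExtreme ℝ (∑ i, A i) (segment ℝ u v)) :
    ∃ i, ∃ a b : E → ℝ, a ≠ b ∧ IsExtreme ℝ (A i) (segment ℝ a b) ∧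
      ∃ t : ℝ, t ≠ 0 ∧ b - a = t • (v - u) := by
  classical
  set w' : E → ℝ := v - u with hw'
  have hw'ne : w' ≠ 0 := sub_ne_zero.2 (Ne.symm huv)
  set F : Set (E → ℝ) := segment ℝ u v with hFdef
  have hFconv : Convex ℝ F := convex_segment u v
  rcases Nat.eq_zero_or_pos k with hk0 | hk
  · exfalso
    subst hk0
    have h1 : u ∈ ∑ i : Fin 0, A i := hex.1 (left_mem_segment ℝ u v)
    have h2 : v ∈ ∑ i : Fin 0, A i := hex.1 (right_mem_segment ℝ u v)
    rw [Finset.univ_eq_empty, Finset.sum_empty] at h1 h2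
    exact huv ((Set.mem_zero.1 h1).trans (Set.mem_zero.1 h2).symm)
  haveI hne : Nonempty (Fin k) := ⟨⟨0, hk⟩⟩
  set F' : Fin k → Set (E → ℝ) := fun i =>
    {x | ∃ g : Fin k → (E → ℝ), (∀ j, g j ∈ A j) ∧ (∑ j, g j) ∈ F ∧ g i = x} with hF'
  have hF'A : ∀ i, F' i ⊆ A i := by
    rintro i x ⟨g, hg, _, rfl⟩
    exact hg i
  have hF'conv : ∀ i, Convex ℝ (F' i) := by
    rintro i x ⟨g, hg, hgF, rfl⟩ y ⟨g', hg', hg'F, rfl⟩ p q hp hq hpq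
    refine ⟨fun j => p • g j + q • g' j, fun j => hconv j (hg j) (hg' j) hp hq hpq, ?_, rfl⟩
    have hsum : ∑ j, (p • g j + q • g' j) = p • ∑ j, g j + q • ∑ j, g' j := by
      rw [Finset.sum_add_distrib, ← Finset.smul_sum, ← Finset.smul_sum]
    rw [hsum]
    exact hFconv hgF hg'F hp hq hpq
  have hF'ex : ∀ i, IsExtreme ℝ (A i) (F' i) := by
    intro i
    refine ⟨hF'A i, ?_⟩
    rintro x₁ hx₁ x₂ hx₂ x ⟨g, hg, hgF, rfl⟩ hxseg
    set s : E → ℝ := ∑ j ∈ Finset.univ.erase i, g j with hs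
    have hsumgi : ∑ j, g j = g i + s := (Finset.add_sum_erase _ g (Finset.mem_univ i)).symm
    obtain ⟨p, q, hp, hq, hpq, hcomb⟩ := hxseg
    have hupd : ∀ z : E → ℝ, z ∈ A i →
        (∑ j, Function.update g i z j = z + s ∧ ∑ j, Function.update g i z j ∈ ∑ j, A j) := by
      intro z hz
      have hsz : ∑ j, Function.update g i z j = z + s := by
        rw [Finset.sum_update_of_mem (Finset.mem_univ i), Finset.sdiff_singleton_eq_erase]
      refine ⟨hsz, ?_⟩
      rw [Set.mem_fintype_sum]
      refine ⟨Function.update g i z, fun j => ?_, rfl⟩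
      rcases eq_or_ne j i with h | h
      · subst h; rw [Function.update_self]; exact hz
      · rw [Function.update_of_ne h]; exact hg j
    obtain ⟨hsz1, hmem1⟩ := hupd x₁ hx₁
    obtain ⟨hsz2, hmem2⟩ := hupd x₂ hx₂
    rw [hsz1] at hmem1
    rw [hsz2] at hmem2
    have hxs : g i + s ∈ F := hsumgi ▸ hgF
    have hseg2 : g i + s ∈ openSegment ℝ (x₁ + s) (x₂ + s) := by
      refine ⟨p, q, hp, hq, hpq, ?_⟩
      have h3 : p • (x₁ + s) + q • (x₂ + s) = (p • x₁ + q • x₂) + (p + q) • s := by module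
      rw [h3, hpq, one_smul, hcomb]
    have hboth := And.intro (hex.2 hmem1 hmem2 hxs hseg2)
      (hex.right_mem_of_mem_openSegment hmem1 hmem2 hxs hseg2)
    · exact ⟨Function.update g i x₁, fun j => by
        rcases eq_or_ne j i with h | h
        · subst h; rw [Function.update_self]; exact hx₁
        · rw [Function.update_of_ne h]; exact hg j,
        by rw [hsz1]; exact hboth.1, Function.update_self i x₁ g⟩
  -- sums of members of the F' i lie in F
  have hsubF : ∀ x : Fin k → (E → ℝ), (∀ i, x i ∈ F' i) → ∑ i, x i ∈ F := by
    intro x hx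
    choose G hG1 hG2 hG3 using hx
    set y : Fin k → E → ℝ := fun i => ∑ j, G i j with hy
    rcases eq_or_lt_of_le (Nat.one_le_iff_ne_zero.2 hk.ne') with hk1 | hk2
    · -- k = 1
      set i0 : Fin k := ⟨0, hk⟩ with hi0
      have huniv : (Finset.univ : Finset (Fin k)) = {i0} := by
        ext j
        simp only [Finset.mem_univ, Finset.mem_singleton, true_iff]
        have := j.2
        apply Fin.ext
        omega
      have h1 : ∑ i, x i = x i0 := by rw [huniv, Finset.sum_singleton]
      have h2 : y i0 = G i0 i0 := by
        simp only [hy]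
        rw [huniv, Finset.sum_singleton]
      rw [h1, ← hG3 i0, ← h2]
      exact hG2 i0
    · -- k ≥ 2
      set κ : ℝ := (k : ℝ) with hκ
      have hκpos : (0:ℝ) < κ := Nat.cast_pos.2 hk
      have hκ2 : (2:ℝ) ≤ κ := by
        rw [hκ]
        exact_mod_cast hk2
      have hκ1pos : (0:ℝ) < κ - 1 := by linarith
      set q : E → ℝ := ∑ i, x i with hq
      set r : E → ℝ := (κ - 1)⁻¹ • ∑ i, (y i - G i i) with hr
      have hcard : ∀ j : Fin k, ((Finset.univ.erase j).card : ℝ) = κ - 1 := by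
        intro j
        rw [Finset.card_erase_of_mem (Finset.mem_univ j), Finset.card_univ, Fintype.card_fin]
        rw [Nat.cast_sub hk, Nat.cast_one]
      have hrmem : r ∈ ∑ j, A j := by
        rw [Set.mem_fintype_sum]
        refine ⟨fun j => (κ - 1)⁻¹ • ∑ i ∈ Finset.univ.erase j, G i j, fun j => ?_, ?_⟩
        · have hmem := (hconv j).sum_mem (t := Finset.univ.erase j)
            (w := fun _ => (κ - 1)⁻¹) (z := fun i => G i j)
            (fun i _ => by positivity)
            (by rw [Finset.sum_const, nsmul_eq_mul, hcard j, mul_inv_cancel₀ hκ1pos.ne'])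
            (fun i _ => hG1 i j)
          rwa [← Finset.smul_sum] at hmem
        · rw [hr, ← Finset.smul_sum]
          congr 1
          have hrow : ∀ j : Fin k, ∑ i ∈ Finset.univ.erase j, G i j
              = (∑ i, G i j) - G j j := fun j =>
            Finset.sum_erase_eq_sub (Finset.mem_univ j)
          rw [Finset.sum_congr rfl fun j _ => hrow j, Finset.sum_sub_distrib,
            Finset.sum_comm, ← Finset.sum_sub_distrib]
      have hqmem : q ∈ ∑ j, A j := by
        rw [Set.mem_fintype_sum]
        exact ⟨x, fun j => hF'A j ⟨G j, hG1 j, hG2 j, hG3 j⟩, rfl⟩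
      have hpmem : κ⁻¹ • ∑ i, y i ∈ F := by
        have hmem := hFconv.sum_mem (t := Finset.univ) (w := fun _ : Fin k => κ⁻¹)
          (z := y) (fun i _ => by positivity)
          (by rw [Finset.sum_const, nsmul_eq_mul, Finset.card_univ, Fintype.card_fin, ← hκ,
            mul_inv_cancel₀ hκpos.ne'])
          (fun i _ => hG2 i)
        rwa [← Finset.smul_sum] at hmem
      have hkey : κ⁻¹ • ∑ i, y i = κ⁻¹ • q + (1 - κ⁻¹) • r := by
        have h1 : (κ - 1) • r = ∑ i, (y i - G i i) := by
          rw [hr, smul_smul, mul_inv_cancel₀ hκ1pos.ne', one_smul]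
        have h2 : ∑ i, y i = q + (κ - 1) • r := by
          rw [h1, hq]
          have h3 : ∑ i, y i = ∑ i, G i i + ∑ i, (y i - G i i) := by
            rw [← Finset.sum_add_distrib]
            exact Finset.sum_congr rfl fun i _ => by abel
          rw [h3]
          congr 1
          exact Finset.sum_congr rfl fun i _ => hG3 i
        rw [h2, smul_add, smul_smul]
        congr 2
        field_simp
      by_cases hqr : q = r
      · have heq2 : κ⁻¹ • q + (1 - κ⁻¹) • q = q := by module
        rw [hkey, ← hqr, heq2] at hpmem
        exact hpmem
      · have hopen : κ⁻¹ • ∑ i, y i ∈ openSegment ℝ q r := by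
          refine ⟨κ⁻¹, 1 - κ⁻¹, by positivity, ?_, by ring, hkey.symm⟩
          have : κ⁻¹ < 1 := by
            rw [inv_lt_one_iff₀]
            right; linarith
          linarith
        exact (hex.2 hqmem hrmem hpmem hopen)
  -- decompositions of u and v
  have hu' := hex.1 (left_mem_segment ℝ u v)
  rw [Set.mem_fintype_sum] at hu'
  obtain ⟨gu, hgu, hguSum⟩ := hu'
  have hv' := hex.1 (right_mem_segment ℝ u v)
  rw [Set.mem_fintype_sum] at hv'
  obtain ⟨gv, hgv, hgvSum⟩ := hv'
  have hguF : ∀ i, gu i ∈ F' i := fun i =>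
    ⟨gu, hgu, by rw [hguSum]; exact left_mem_segment ℝ u v, rfl⟩
  have hgvF : ∀ i, gv i ∈ F' i := fun i =>
    ⟨gv, hgv, by rw [hgvSum]; exact right_mem_segment ℝ u v, rfl⟩
  -- every member of F' i is on the line gu i + θ • w'
  have hcoeff : ∀ c : ℝ, u + c • w' ∈ F → c ∈ Set.Icc (0:ℝ) 1 := by
    intro c hc
    rw [hFdef, segment_eq_image'] at hc
    obtain ⟨θ, hθ, heq⟩ := hc
    have heq' : u + θ • (v - u) = u + c • w' := heq
    have hcθ : c = θ := by
      have h0 : (c - θ) • w' = 0 := by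
        have h1 : (c - θ) • w' = (u + c • w') - (u + θ • (v - u)) := by
          rw [← hw']; module
        rw [heq'] at h1
        simpa using h1
      rcases smul_eq_zero.1 h0 with h | h
      · linarith [sub_eq_zero.1 h]
      · exact absurd h hw'ne
    rw [hcθ]
    exact hθ
  have hline : ∀ i, ∀ x ∈ F' i, ∃ θ : ℝ, θ ∈ Set.Icc (0:ℝ) 1 ∧ x = gu i + θ • w' := by
    intro i x hxF
    have hxsum : x + ∑ j ∈ Finset.univ.erase i, gu j ∈ F := by
      have hval := hsubF (Function.update gu i x) (fun j => by
        rcases eq_or_ne j i with h | h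
        · subst h; rw [Function.update_self]; exact hxF
        · rw [Function.update_of_ne h]; exact hguF j)
      rwa [Finset.sum_update_of_mem (Finset.mem_univ i),
        Finset.sdiff_singleton_eq_erase] at hval
    have husum : gu i + ∑ j ∈ Finset.univ.erase i, gu j = u := by
      rw [Finset.add_sum_erase _ gu (Finset.mem_univ i)]
      exact hguSum
    rw [hFdef, segment_eq_image'] at hxsum
    obtain ⟨θ, hθ, heq⟩ := hxsum
    have heq' : u + θ • (v - u) = x + ∑ j ∈ Finset.univ.erase i, gu j := heq
    refine ⟨θ, hθ, ?_⟩
    have : x = u + θ • w' - ∑ j ∈ Finset.univ.erase i, gu j := by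
      rw [← hw'] at heq'
      rw [heq']; abel
    rw [this, ← husum]; abel
  set T : Fin k → Set ℝ := fun i => {θ : ℝ | gu i + θ • w' ∈ F' i} with hT
  have hTmem : ∀ i θ, θ ∈ T i ↔ gu i + θ • w' ∈ F' i := fun i θ => Iff.rfl
  have hinj : ∀ (z : E → ℝ) (θ θ' : ℝ), z + θ • w' = z + θ' • w' → θ = θ' := by
    intro z θ θ' h
    have h0 : (θ - θ') • w' = 0 := by
      have h1 : (θ - θ') • w' = (z + θ • w') - (z + θ' • w') := by module
      rw [h] at h1
      simpa using h1
    rcases smul_eq_zero.1 h0 with h' | h'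
    · linarith [sub_eq_zero.1 h']
    · exact absurd h' hw'ne
  have hTsub : ∀ i, T i ⊆ Set.Icc (0:ℝ) 1 := by
    intro i θ hθ
    obtain ⟨θ', hθ', heq⟩ := hline i _ hθ
    have := hinj (gu i) θ θ' heq
    rw [this]
    exact hθ'
  have hT0 : ∀ i, (0:ℝ) ∈ T i := by
    intro i
    rw [hTmem]
    simpa using hguF i
  have hTne2 : ∀ i, (T i).Nonempty := fun i => ⟨0, hT0 i⟩
  have hTbddAbove : ∀ i, BddAbove (T i) := fun i => (bddAbove_Icc).mono (hTsub i)
  have hTbddBelow : ∀ i, BddBelow (T i) := fun i => (bddBelow_Icc).mono (hTsub i)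
  -- θv decomposition of v
  have hθv : ∀ i, ∃ θ : ℝ, θ ∈ T i ∧ gv i = gu i + θ • w' := by
    intro i
    obtain ⟨θ, _, heq⟩ := hline i _ (hgvF i)
    exact ⟨θ, by rw [hTmem, ← heq]; exact hgvF i, heq⟩
  choose θv hθvT hθveq using hθv
  have hθvsum : ∑ i, θv i = 1 := by
    have h1 : ∑ i, gv i = ∑ i, (gu i + θv i • w') :=
      Finset.sum_congr rfl fun i _ => hθveq i
    rw [hgvSum] at h1
    rw [Finset.sum_add_distrib, hguSum, ← Finset.sum_smul] at h1
    have h2 : v = u + (1:ℝ) • w' := by rw [one_smul, hw']; abel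
    exact (hinj u 1 (∑ i, θv i) (h2.symm.trans h1)).symm
  -- sup of T i
  set β : Fin k → ℝ := fun i => sSup (T i) with hβ
  have hβub : ∀ i, β i ≤ 1 := fun i =>
    csSup_le (hTne2 i) (fun θ hθ => (hTsub i hθ).2)
  have hβge : ∀ i, θv i ≤ β i := fun i => le_csSup (hTbddAbove i) (hθvT i)
  have hβdef : ∀ i, β i = sSup (T i) := fun _ => rfl
  have hkpos : (0:ℝ) < (k:ℝ) := Nat.cast_pos.2 hk
  have hsumβle : ∑ i, β i ≤ 1 := by
    by_contra hgt
    push_neg at hgt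
    set δ : ℝ := (∑ i, β i - 1) / k with hδ
    have hδpos : 0 < δ := div_pos (by linarith) hkpos
    have hch : ∀ i, ∃ θ ∈ T i, β i - δ < θ := by
      intro i
      apply exists_lt_of_lt_csSup (hTne2 i)
      rw [← hβdef i]
      linarith
    choose t' ht'T ht'gt using hch
    have hmemF : ∑ i, (gu i + t' i • w') ∈ F := hsubF _ (fun i => ht'T i)
    have hsum2 : ∑ i, (gu i + t' i • w') = u + (∑ i, t' i) • w' := by
      rw [Finset.sum_add_distrib, hguSum, ← Finset.sum_smul]
    rw [hsum2] at hmemF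
    have hle1 := (hcoeff _ hmemF).2
    have h3 : ∑ i, (β i - δ) < ∑ i, t' i :=
      Finset.sum_lt_sum_of_nonempty Finset.univ_nonempty (fun i _ => ht'gt i)
    have h4 : ∑ i, (β i - δ) = ∑ i, β i - (k:ℝ) * δ := by
      rw [Finset.sum_sub_distrib, Finset.sum_const, nsmul_eq_mul, Finset.card_univ,
        Fintype.card_fin]
    have h5 : (k:ℝ) * δ = ∑ i, β i - 1 := by
      rw [hδ, mul_comm, div_mul_cancel₀ _ hkpos.ne']
    linarith
  have hβeq : ∀ i, β i = θv i := by
    have hsge : ∑ i, θv i ≤ ∑ i, β i := Finset.sum_le_sum fun i _ => hβge i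
    have hs : ∑ i, θv i = ∑ i, β i := le_antisymm hsge (by rw [hθvsum]; linarith)
    intro i
    exact ((Finset.sum_eq_sum_iff_of_le (fun i _ => hβge i)).1 hs i (Finset.mem_univ i)).symm
  -- inf of T i is 0
  set α : Fin k → ℝ := fun i => sInf (T i) with hα
  have hαdef : ∀ i, α i = sInf (T i) := fun _ => rfl
  have hαle : ∀ i, α i ≤ 0 := fun i => csInf_le (hTbddBelow i) (hT0 i)
  have hsumαge : (0:ℝ) ≤ ∑ i, α i := by
    by_contra hlt
    push_neg at hlt
    set δ : ℝ := (-(∑ i, α i)) / k with hδ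
    have hδpos : 0 < δ := div_pos (by linarith) hkpos
    have hch : ∀ i, ∃ θ ∈ T i, θ < α i + δ := by
      intro i
      apply exists_lt_of_csInf_lt (hTne2 i)
      rw [← hαdef i]
      linarith
    choose t' ht'T ht'lt using hch
    have hmemF : ∑ i, (gu i + t' i • w') ∈ F := hsubF _ (fun i => ht'T i)
    have hsum2 : ∑ i, (gu i + t' i • w') = u + (∑ i, t' i) • w' := by
      rw [Finset.sum_add_distrib, hguSum, ← Finset.sum_smul]
    rw [hsum2] at hmemF
    have hge0 := (hcoeff _ hmemF).1
    have h3 : ∑ i, t' i < ∑ i, (α i + δ) :=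
      Finset.sum_lt_sum_of_nonempty Finset.univ_nonempty (fun i _ => ht'lt i)
    have h4 : ∑ i, (α i + δ) = ∑ i, α i + (k:ℝ) * δ := by
      rw [Finset.sum_add_distrib, Finset.sum_const, nsmul_eq_mul, Finset.card_univ,
        Fintype.card_fin]
    have h5 : (k:ℝ) * δ = -(∑ i, α i) := by
      rw [hδ, mul_comm, div_mul_cancel₀ _ hkpos.ne']
    linarith
  have hα0 : ∀ i, α i = 0 := by
    have hsle : ∑ i, α i ≤ 0 := Finset.sum_nonpos fun i _ => hαle i
    have hz : ∑ i, α i = 0 := le_antisymm hsle hsumαge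
    exact fun i => (Finset.sum_eq_zero_iff_of_nonpos (fun i _ => hαle i)).1 hz i
      (Finset.mem_univ i)
  obtain ⟨i₀, hi₀⟩ : ∃ i, 0 < θv i := by
    by_contra h
    push_neg at h
    have : ∑ i, θv i ≤ 0 := Finset.sum_nonpos fun i _ => h i
    rw [hθvsum] at this
    linarith
  have hTconv : ∀ i, Convex ℝ (T i) := by
    intro i θ hθ θ' hθ' p q hp hq hpq
    rw [hTmem] at hθ hθ' ⊢
    have hcomb : gu i + (p • θ + q • θ') • w'
        = p • (gu i + θ • w') + q • (gu i + θ' • w') := by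
      have h3 : p • (gu i + θ • w') + q • (gu i + θ' • w')
          = (p + q) • gu i + (p * θ + q * θ') • w' := by module
      rw [h3, hpq, one_smul, smul_eq_mul, smul_eq_mul]
    rw [hcomb]
    exact hF'conv i hθ hθ' hp hq hpq
  set aa : E → ℝ := gu i₀ with haa
  set bb : E → ℝ := gu i₀ + θv i₀ • w' with hbb
  have hba : bb - aa = θv i₀ • w' := by rw [hbb, haa]; abel
  have hFi₀ : F' i₀ = segment ℝ aa bb := by
    apply Set.eq_of_subset_of_subset
    · intro x hx
      obtain ⟨θ, _, heqx⟩ := hline i₀ x hx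
      have hθT : θ ∈ T i₀ := by rw [hTmem, ← heqx]; exact hx
      have hθ0 : 0 ≤ θ := by
        have h6 := csInf_le (hTbddBelow i₀) hθT
        rw [← hαdef i₀, hα0 i₀] at h6
        exact h6
      have hθle : θ ≤ θv i₀ := by
        have h6 := le_csSup (hTbddAbove i₀) hθT
        rw [← hβdef i₀, hβeq i₀] at h6
        exact h6
      rw [segment_eq_image']
      refine ⟨θ / θv i₀, ⟨div_nonneg hθ0 hi₀.le, by rw [div_le_one hi₀]; exact hθle⟩, ?_⟩
      show aa + (θ / θv i₀) • (bb - aa) = x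
      rw [hba, smul_smul, div_mul_cancel₀ _ hi₀.ne']
      rw [haa]
      exact heqx.symm
    · intro z hz
      rw [segment_eq_image'] at hz
      obtain ⟨c, ⟨hc0, hc1⟩, heqz⟩ := hz
      have heqz' : aa + c • (bb - aa) = z := heqz
      rw [hba, smul_smul] at heqz'
      have hmemT : c * θv i₀ ∈ T i₀ := by
        have hIcc : Set.Icc (0:ℝ) (θv i₀) ⊆ T i₀ :=
          (hTconv i₀).ordConnected.out (hT0 i₀) (hθvT i₀)
        exact hIcc ⟨mul_nonneg hc0 hi₀.le, by nlinarith⟩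
      rw [hTmem] at hmemT
      rw [← heqz', haa]
      exact hmemT
  refine ⟨i₀, aa, bb, ?_, ?_, θv i₀, hi₀.ne', ?_⟩
  · intro h
    have h7 : θv i₀ • w' = 0 := by
      have := h
      rw [hbb] at this
      exact (left_eq_add.1 this)
    exact (smul_ne_zero hi₀.ne' hw'ne) h7
  · rw [← hFi₀]
    exact hF'ex i₀
  · rw [hba, hw']

lemma no_edge_cone {p q : E → ℝ} (hp0 : p ≠ 0)
    (hex : IsExtreme ℝ (dominant (0 : Set (E → ℝ))) (segment ℝ p q)) : False := by
  obtain ⟨y, hy, hle⟩ := hex.1 (left_mem_segment ℝ p q)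
  rw [Set.mem_zero] at hy
  subst hy
  have hmem1 : (1/2 : ℝ) • p ∈ dominant (0 : Set (E → ℝ)) := by
    refine ⟨0, Set.mem_zero.2 rfl, fun j => ?_⟩
    have := hle j
    simp only [Pi.zero_apply] at this ⊢
    simp only [Pi.smul_apply, smul_eq_mul]
    linarith
  have hmem2 : (3/2 : ℝ) • p ∈ dominant (0 : Set (E → ℝ)) := by
    refine ⟨0, Set.mem_zero.2 rfl, fun j => ?_⟩
    have := hle j
    simp only [Pi.zero_apply] at this ⊢
    simp only [Pi.smul_apply, smul_eq_mul]
    linarith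
  have hopen : p ∈ openSegment ℝ ((1/2 : ℝ) • p) ((3/2 : ℝ) • p) :=
    ⟨1/2, 1/2, by norm_num, by norm_num, by norm_num, by module⟩
  have hboth := And.intro (hex.2 hmem1 hmem2 (left_mem_segment ℝ p q) hopen)
    (hex.right_mem_of_mem_openSegment hmem1 hmem2 (left_mem_segment ℝ p q) hopen)
  rw [segment_eq_image'] at hboth
  obtain ⟨⟨t₁, ⟨ht₁0, _⟩, h₁⟩, ⟨t₂, ⟨ht₂0, _⟩, h₂⟩⟩ := hboth
  have h₁' : p + t₁ • (q - p) = (1/2 : ℝ) • p := h₁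
  have h₂' : p + t₂ • (q - p) = (3/2 : ℝ) • p := h₂
  have hsum : (t₁ + t₂) • (q - p) = 0 := by
    have e : (t₁ + t₂) • (q - p)
        = (p + t₁ • (q - p)) + (p + t₂ • (q - p)) - (2:ℝ) • p := by module
    rw [h₁', h₂'] at e
    rw [e]; module
  rcases eq_or_ne (t₁ + t₂) 0 with h0 | h0
  · have ht₂ : t₂ = 0 := by linarith
    rw [ht₂, zero_smul, add_zero] at h₂'
    have : ((3/2 : ℝ) - 1) • p = 0 := by
      have e2 : ((3/2 : ℝ) - 1) • p = (3/2 : ℝ) • p - p := by module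
      rw [e2, ← h₂']; module
    rcases smul_eq_zero.1 this with h | h
    · norm_num at h
    · exact hp0 h
  · have hqp : q - p = 0 := by
      rcases smul_eq_zero.1 hsum with h | h
      · exact absurd h h0
      · exact h
    rw [hqp, smul_zero, add_zero] at h₂'
    have : ((3/2 : ℝ) - 1) • p = 0 := by
      have e2 : ((3/2 : ℝ) - 1) • p = (3/2 : ℝ) • p - p := by module
      rw [e2, ← h₂']; module
    rcases smul_eq_zero.1 this with h | h
    · norm_num at h
    · exact hp0 h

end Stmt7

theorem stmt7 {E : Type*} [Fintype E] (k : ℕ) (Q : Fin k → Set (E → ℝ))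
    (hpoly : ∀ i, ∃ Vs : Finset (E → ℝ), (Vs : Set (E → ℝ)).Nonempty ∧
      Q i = convexHull ℝ (↑Vs : Set (E → ℝ)))
    (w : E → ℝ) :
    IsEdgeDirOf (dominant (∑ i : Fin k, Q i)) w ↔
      ∃ i, IsEdgeDirOf (dominant (Q i)) w := by
  classical
  rcases isEmpty_or_nonempty E with hE | hE
  · haveI : Subsingleton (E → ℝ) := ⟨fun f g => funext fun j => hE.elim j⟩
    constructor
    · rintro ⟨u, v, ⟨huv, _⟩, _⟩
      exact absurd (Subsingleton.elim u v) huv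
    · rintro ⟨i, u, v, ⟨huv, _⟩, _⟩
      exact absurd (Subsingleton.elim u v) huv
  rcases Nat.eq_zero_or_pos k with hk0 | hk
  · subst hk0
    constructor
    · rintro ⟨u, v, ⟨huv, hex⟩, t, ht, hvu⟩
      exfalso
      rw [Finset.univ_eq_empty, Finset.sum_empty] at hex
      rcases eq_or_ne u 0 with hu0 | hu0
      · refine Stmt7.no_edge_cone (p := v) (q := u) ?_ (by rwa [segment_symm] at hex)
        exact fun h => huv (hu0.trans h.symm)
      · exact Stmt7.no_edge_cone hu0 hex
    · rintro ⟨i, _⟩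
      exact i.elim0
  · have hQconv : ∀ i, Convex ℝ (dominant (Q i)) := by
      intro i
      obtain ⟨S, _, hSeq⟩ := hpoly i
      rw [hSeq, Stmt7.dominant_eq]
      exact (convex_convexHull ℝ _).add Stmt7.convex_C
    constructor
    · rintro ⟨u, v, ⟨huv, hex⟩, t, ht, hvu⟩
      rw [Stmt7.dominant_sum hk Q] at hex
      obtain ⟨i, a, b, hab, hexi, t₂, ht₂, hba⟩ := Stmt7.fwd _ hQconv huv hex
      refine ⟨i, a, b, ⟨hab, hexi⟩, t₂ * t, mul_ne_zero ht₂ ht, ?_⟩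
      rw [hba, hvu, smul_smul]
    · rintro ⟨i, a, b, ⟨hab, hexi⟩, tw, htw, hba⟩
      choose Svs hSvsne hSvseq using hpoly
      have hexi' : IsExtreme ℝ (dominant (convexHull ℝ (↑(Svs i) : Set (E → ℝ))))
          (segment ℝ a b) := by rwa [hSvseq i] at hexi
      obtain ⟨f, hneg, hfd, hfs⟩ := Stmt7.exposing_functional hab hexi'
      set d : E → ℝ := b - a with hd
      have hdne : d ≠ 0 := sub_ne_zero.2 (Ne.symm hab)
      -- argmax data for every summand
      have hAM : ∀ j, ∃ T : Finset (E → ℝ), T.Nonempty ∧ (↑T : Set (E → ℝ)) ⊆ ↑(Svs j) ∧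
          {x ∈ dominant (Q j) | ∀ y ∈ dominant (Q j), f y ≤ f x}
            = convexHull ℝ (↑T : Set (E → ℝ)) ∧
          ∀ s ∈ T, ∀ s' ∈ Svs j, f s' ≤ f s := by
        intro j
        have := Stmt7.argmax_dominant (Finset.coe_nonempty.1 (hSvsne j)) f hneg
        rwa [← hSvseq j] at this
      choose T hTne hTsub hTeq hTmax using hAM
      -- attainment
      have hatt : ∀ j, ∃ x ∈ dominant (Q j), ∀ y ∈ dominant (Q j), f y ≤ f x := by
        intro j
        obtain ⟨s₀, hs₀⟩ := hTne j
        have : s₀ ∈ {x ∈ dominant (Q j) | ∀ y ∈ dominant (Q j), f y ≤ f x} := by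
          rw [hTeq j]
          exact subset_convexHull ℝ _ hs₀
        exact ⟨s₀, this.1, this.2⟩
      -- M i is a segment on the line through a, b
      have hamax : ∀ y ∈ dominant (Q i), f y ≤ f a := by
        intro y hy
        rw [hSvseq i] at hy
        exact Stmt7.f_le_on_dominant hneg (fun s hs => (hfs s hs).1) y hy
      have haM : a ∈ {x ∈ dominant (Q i) | ∀ y ∈ dominant (Q i), f y ≤ f x} :=
        ⟨by rw [hSvseq i]; exact hexi'.1 (left_mem_segment ℝ a b), hamax⟩
      have hfb : f b = f a := by
        have : f b - f a = f (b - a) := (map_sub f b a).symm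
        rw [hfd] at this
        linarith
      have hbM : b ∈ {x ∈ dominant (Q i) | ∀ y ∈ dominant (Q i), f y ≤ f x} :=
        ⟨by rw [hSvseq i]; exact hexi'.1 (right_mem_segment ℝ a b),
          fun y hy => (hamax y hy).trans hfb.ge⟩
      have hLconv : Convex ℝ {x : E → ℝ | ∃ θ : ℝ, x = a + θ • d} := by
        rintro x ⟨θ, rfl⟩ y ⟨θ', rfl⟩ p q hp hq hpq
        refine ⟨p * θ + q * θ', ?_⟩
        have h3 : p • (a + θ • d) + q • (a + θ' • d)
            = (p + q) • a + (p * θ + q * θ') • d := by module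
        rw [h3, hpq, one_smul]
      have hMiL : convexHull ℝ (↑(T i) : Set (E → ℝ)) ⊆ {x : E → ℝ | ∃ θ : ℝ, x = a + θ • d} := by
        apply convexHull_min ?_ hLconv
        intro s hs
        have hsS : s ∈ Svs i := hTsub i hs
        have hle : f s ≤ f a := (hfs s hsS).1
        have hge : f a ≤ f s := by
          have hsM : s ∈ {x ∈ dominant (Q i) | ∀ y ∈ dominant (Q i), f y ≤ f x} := by
            rw [hTeq i]
            exact subset_convexHull ℝ _ hs
          refine hsM.2 a ?_
          rw [hSvseq i]
          exact hexi'.1 (left_mem_segment ℝ a b)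
        exact (hfs s hsS).2 (le_antisymm hle hge)
      obtain ⟨a', b', τ, hsegeq, hτ⟩ := Stmt7.seg_of_line hdne
        ((T i).finite_toSet.isCompact_convexHull ℝ) (convex_convexHull ℝ _)
        (Set.Nonempty.mono (subset_convexHull ℝ _) (Finset.coe_nonempty.2 (hTne i)))
        (fun x hx => hMiL hx)
      have haconv : a ∈ convexHull ℝ (↑(T i) : Set (E → ℝ)) := by
        rw [← hTeq i]; exact haM
      have hbconv : b ∈ convexHull ℝ (↑(T i) : Set (E → ℝ)) := by
        rw [← hTeq i]; exact hbM
      have ha'b' : a' ≠ b' := by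
        intro h
        rw [h, segment_same] at hsegeq
        have h1 : a ∈ ({b'} : Set (E → ℝ)) := by rw [← hsegeq]; exact haconv
        have h2 : b ∈ ({b'} : Set (E → ℝ)) := by rw [← hsegeq]; exact hbconv
        rw [Set.mem_singleton_iff] at h1 h2
        exact hab (h1.trans h2.symm)
      have hτne : τ ≠ 0 := by
        intro h
        rw [h, zero_smul, sub_eq_zero] at hτ
        exact ha'b' hτ.symm
      set K : Set (E → ℝ) := ∑ j ∈ Finset.univ.erase i,
        convexHull ℝ (↑(T j) : Set (E → ℝ)) with hK
      have hKprop := Stmt7.sum_compact_convex_nonempty (Finset.univ.erase i)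
        (fun j => convexHull ℝ (↑(T j) : Set (E → ℝ)))
        (fun j _ => ⟨(T j).finite_toSet.isCompact_convexHull ℝ, convex_convexHull ℝ _,
          Set.Nonempty.mono (subset_convexHull ℝ _) (Finset.coe_nonempty.2 (hTne j))⟩)
      set D : Set (E → ℝ) := dominant (∑ i, Q i) with hD
      have hMex : IsExtreme ℝ D {x ∈ D | ∀ y ∈ D, f y ≤ f x} := Stmt7.argmax_isExtreme D f
      have hMeq : {x ∈ D | ∀ y ∈ D, f y ≤ f x} = segment ℝ a' b' + K := by
        rw [hD, Stmt7.dominant_sum hk Q, Stmt7.argmax_sum _ f hatt,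
          Finset.sum_congr rfl (fun j _ => hTeq j),
          ← Finset.add_sum_erase _ _ (Finset.mem_univ i), hsegeq]
      obtain ⟨u', v', hu'v', hedge, t₁, ht₁, hvu'⟩ := Stmt7.segment_add_compact_has_edge
        (Module.finrank ℝ (vectorSpan ℝ (segment ℝ a' b' + K))) a' b' K ha'b'
        hKprop.1 hKprop.2.1 hKprop.2.2 le_rfl
      rw [← hMeq] at hedge
      refine ⟨u', v', ⟨hu'v', hMex.trans hedge⟩, t₁ * (τ * tw),
        mul_ne_zero ht₁ (mul_ne_zero hτne htw), ?_⟩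
      have hdw : d = tw • w := by rw [hd]; exact hba
      rw [hvu', hτ, hdw, smul_smul, smul_smul, mul_assoc]
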